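/- (Nonlocality with PI, no-witness direction) Suppose η̃_μ ρ̃_μ − η̃_ω ρ̃_ω is positive semidefinite for all ω ∈ Ω_S. Then every POVM {M̃_ω}_{ω∈Ω_S} satisfies Σ_ω η̃_ω Tr(ρ̃_ω M̃_ω) ≤ η̃_μ, hence p_G^PI(E,S) = 2η̃_μ = p_SEP^PI(E,S) and no nonlocality with PI occurs. -/

import Mathlib

open Matrix
open scoped ComplexOrder

/-- Hermitian operators on the bipartite space `ℂ^dA ⊗ ℂ^dB`, modeled as matrices
indexed by `Fin dA × Fin dB`. -/
abbrev Mat (dA dB : ℕ) := Matrix (Fin dA × Fin dB) (Fin dA × Fin dB) ℂ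

/-- A bipartite operator is separable if it is a finite sum of Kronecker products of
positive-semidefinite operators on the two factors. -/
def IsSep {dA dB : ℕ} (E : Mat dA dB) : Prop :=
  ∃ (n : ℕ) (A : Fin n → Matrix (Fin dA) (Fin dA) ℂ)
    (B : Fin n → Matrix (Fin dB) (Fin dB) ℂ),
    (∀ l, (A l).PosSemidef) ∧ (∀ l, (B l).PosSemidef) ∧
      E = ∑ l, Matrix.kroneckerMap (· * ·) (A l) (B l)

/-- Membership in the dual cone `SEP*` (block positivity): Hermitian with
`Tr(E F) ≥ 0` for every separable `F`. -/
def InSEPdual {dA dB : ℕ} (E : Mat dA dB) : Prop :=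
  E.IsHermitian ∧ ∀ F : Mat dA dB, IsSep F → 0 ≤ (E * F).trace

lemma psd_trace_nonneg {n : Type*} [Fintype n] [DecidableEq n]
    {A : Matrix n n ℂ} (hA : A.PosSemidef) : 0 ≤ A.trace := by
  rw [Matrix.trace]
  refine Finset.sum_nonneg fun i _ => ?_
  exact hA.diag_nonneg

lemma psd_trace_mul_nonneg {n : Type*} [Fintype n] [DecidableEq n]
    {A B : Matrix n n ℂ} (hA : A.PosSemidef) (hB : B.PosSemidef) :
    0 ≤ (A * B).trace := by
  obtain ⟨C, rfl⟩ : ∃ C : Matrix n n ℂ, A = Cᴴ * C := by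
    open scoped MatrixOrder Matrix.Norms.L2Operator in
    exact CStarAlgebra.nonneg_iff_eq_star_mul_self.mp hA.nonneg
  have h : (Cᴴ * C * B).trace = (C * B * Cᴴ).trace := by
    rw [Matrix.mul_assoc, Matrix.trace_mul_comm, Matrix.mul_assoc]
  rw [h]
  exact psd_trace_nonneg (hB.mul_mul_conjTranspose_same C)

theorem pi_no_nonlocality_psd {dA dB : ℕ}
    (η : Fin 4 → ℝ) (ρ : Fin 4 → Mat dA dB)
    (hη : ∀ i, 0 < η i) (hsum : ∑ i, η i = 1)
    (hρ : ∀ i, (ρ i).PosSemidef ∧ (ρ i).trace = 1)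
    (s c : Fin 2 → Fin 4) (hbij : Function.Bijective (Sum.elim s c))
    (ηt : Fin 2 × Fin 2 → ℝ) (ρt : Fin 2 × Fin 2 → Mat dA dB)
    (hηt : ∀ ω, ηt ω = (η (s ω.1) + η (c ω.2)) / 2)
    (hρt : ∀ ω, ρt ω = (((η (s ω.1) + η (c ω.2) : ℝ) : ℂ))⁻¹ •
        ((η (s ω.1) : ℂ) • ρ (s ω.1) + (η (c ω.2) : ℂ) • ρ (c ω.2)))
    (μ : Fin 2 × Fin 2)
    (hpsd : ∀ ω, ((ηt μ : ℂ) • ρt μ - (ηt ω : ℂ) • ρt ω).PosSemidef) :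
    (∀ M : Fin 2 × Fin 2 → Mat dA dB, (∀ ω, (M ω).PosSemidef) → ∑ ω, M ω = 1 →
        ∑ ω, ηt ω * ((ρt ω * M ω).trace).re ≤ ηt μ) ∧
    (∃ M : Fin 2 × Fin 2 → Mat dA dB, (∀ ω, (M ω).PosSemidef) ∧ ∑ ω, M ω = 1 ∧
        ∑ ω, ηt ω * ((ρt ω * M ω).trace).re = ηt μ) := by
  -- trace of each averaged state is 1
  have htr : ∀ ω, (ρt ω).trace = 1 := by
    intro ω
    have ha := hη (s ω.1)
    have hb := hη (c ω.2)
    have hne : ((η (s ω.1) + η (c ω.2) : ℝ) : ℂ) ≠ 0 := by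
      exact_mod_cast ne_of_gt (add_pos ha hb)
    rw [hρt ω, Matrix.trace_smul, Matrix.trace_add, Matrix.trace_smul,
      Matrix.trace_smul, (hρ (s ω.1)).2, (hρ (c ω.2)).2]
    simp only [smul_eq_mul, mul_one]; rw [← Complex.ofReal_add, inv_mul_cancel₀ hne]
  constructor
  · intro M hM hsumM
    have key : ∀ ω, ηt ω * ((ρt ω * M ω).trace).re ≤ ηt μ * ((ρt μ * M ω).trace).re := by
      intro ω
      have h0 := psd_trace_mul_nonneg (hpsd ω) (hM ω)
      have heq : (((ηt μ : ℂ) • ρt μ - (ηt ω : ℂ) • ρt ω) * M ω).trace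
          = (ηt μ : ℂ) * (ρt μ * M ω).trace - (ηt ω : ℂ) * (ρt ω * M ω).trace := by
        rw [Matrix.sub_mul, Matrix.trace_sub, Matrix.smul_mul, Matrix.smul_mul,
          Matrix.trace_smul, Matrix.trace_smul]
        simp [smul_eq_mul]
      have := (Complex.le_def.mp h0).1
      rw [heq] at this
      simpa [Complex.sub_re, Complex.re_ofReal_mul, sub_nonneg] using this
    calc ∑ ω, ηt ω * ((ρt ω * M ω).trace).re
        ≤ ∑ ω, ηt μ * ((ρt μ * M ω).trace).re := Finset.sum_le_sum fun ω _ => key ω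
      _ = ηt μ * ((ρt μ * ∑ ω, M ω).trace).re := by
          rw [Matrix.mul_sum, Matrix.trace_sum, Complex.re_sum, Finset.mul_sum]
      _ = ηt μ := by rw [hsumM, Matrix.mul_one, htr μ]; simp
  · refine ⟨fun ω => if ω = μ then 1 else 0, fun ω => ?_, ?_, ?_⟩
    · by_cases h : ω = μ <;> simp [h, Matrix.PosSemidef.zero, Matrix.PosSemidef.one]
    · simp [Finset.sum_ite_eq']
    · rw [Finset.sum_eq_single μ]
      · simp [Matrix.mul_one, htr μ]
      · intro b _ hb; simp [hb]
      · simp
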